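/- For every α > 0, the third partial derivative of B with respect to η at η = 0 equals B_ηηη(0, α) = −32/105. Consequently, when α = 7.5 (so that B(0,α) = B_η(0,α) = B_ηη(0,α) = 0), one has η · B(η, 7.5) < 0 for all η ≠ 0 with |η| sufficiently small. -/

import Mathlib

open Real MeasureTheory Set Filter

/-- `A k η = ∫_0^1 z^k e^{-η z²} dz`. -/
noncomputable def A (k : ℕ) (η : ℝ) : ℝ :=
  ∫ z in (0:ℝ)..1, z ^ k * Real.exp (-η * z ^ 2)

/-- `B(η, α) = 3 e^{-η} / A₀(η) − (3 − 2η + 4η²/α)`. -/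
noncomputable def B (η α : ℝ) : ℝ :=
  3 * Real.exp (-η) / A 0 η - (3 - 2 * η + 4 * η ^ 2 / α)

lemma contA (k : ℕ) (η : ℝ) : Continuous (fun z : ℝ => z ^ k * Real.exp (-η * z ^ 2)) := by
  continuity

lemma A_pos (η : ℝ) : 0 < A 0 η := by
  apply intervalIntegral.intervalIntegral_pos_of_pos_on
  · exact (contA 0 η).intervalIntegrable 0 1
  · intro x _; positivity
  · norm_num

lemma A_zero (k : ℕ) : A k 0 = 1 / (k + 1) := by
  simp [A, integral_pow]

lemma hasDerivAt_A (k : ℕ) (η : ℝ) : HasDerivAt (A k) (-(A (k + 2) η)) η := by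
  have key := intervalIntegral.hasDerivAt_integral_of_dominated_loc_of_deriv_le
    (F := fun x z => z ^ k * Real.exp (-x * z ^ 2))
    (F' := fun x z => -(z ^ (k + 2) * Real.exp (-x * z ^ 2)))
    (x₀ := η) (a := 0) (b := 1) (bound := fun _ => Real.exp (|η| + 1)) (μ := volume)
    (Metric.ball_mem_nhds η (by norm_num : (0:ℝ) < 1))
    (Eventually.of_forall fun x => ((contA k x).aestronglyMeasurable).restrict)
    ((contA k η).intervalIntegrable 0 1)
    (((contA (k+2) η).neg.aestronglyMeasurable).restrict)
    ?_ (intervalIntegrable_const) ?_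
  · have : (∫ z in (0:ℝ)..1, -(z ^ (k+2) * Real.exp (-η * z ^ 2))) = -(A (k+2) η) := by
      rw [intervalIntegral.integral_neg]; rfl
    exact this ▸ key.2
  · refine Eventually.of_forall fun z hz x hx => ?_
    have hz' : z ∈ Set.Ioc (0:ℝ) 1 := by
      simpa [Set.uIoc_of_le (by norm_num : (0:ℝ) ≤ 1)] using hz
    have hz0 : 0 < z := hz'.1
    have hz1 : z ≤ 1 := hz'.2
    have h1 : |z ^ (k+2) * Real.exp (-x * z ^ 2)| ≤ Real.exp (-x * z ^ 2) := by
      rw [abs_of_nonneg (by positivity)]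
      have : z ^ (k+2) ≤ 1 := pow_le_one₀ hz0.le hz1
      nlinarith [Real.exp_pos (-x * z^2)]
    have h2 : Real.exp (-x * z ^ 2) ≤ Real.exp (|η| + 1) := by
      apply Real.exp_le_exp.2
      have hxd : |x - η| < 1 := by simpa [Real.dist_eq] using Metric.mem_ball.1 hx
      have : |x| ≤ |η| + 1 := by
        have := abs_sub_abs_le_abs_sub x η; linarith
      have h3 : -x * z ^ 2 ≤ |x| * z ^ 2 := by nlinarith [abs_nonneg x, neg_abs_le x, sq_nonneg z]
      nlinarith [sq_nonneg z, abs_nonneg x, mul_le_one₀ (le_refl (1:ℝ)) (by positivity : (0:ℝ) ≤ z^2) (by nlinarith : z^2 ≤ 1)]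
    rw [norm_neg, Real.norm_eq_abs]
    exact h1.trans h2
  · refine Eventually.of_forall fun z _ x _ => ?_
    have h : HasDerivAt (fun x : ℝ => -x * z ^ 2) (-z ^ 2) x := by
      simpa using ((hasDerivAt_id x).neg.mul_const (z ^ 2))
    have := ((h.exp).const_mul (z ^ k))
    refine this.congr_deriv (Eq.symm ?_)
    show -(z ^ (k+2) * Real.exp (-x * z ^ 2)) = _
    rw [pow_add]; ring

lemma hB1 (α : ℝ) (hα : α ≠ 0) (η : ℝ) :
    HasDerivAt (fun η => B η α)
      (-3 * Real.exp (-η) / A 0 η + 3 * Real.exp (-η) * A 2 η / A 0 η ^ 2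
        + 2 - 8 * η / α) η := by
  have he : HasDerivAt (fun η : ℝ => Real.exp (-η)) (-Real.exp (-η)) η := by
    simpa using (hasDerivAt_neg η).exp
  have h0 := hasDerivAt_A 0 η
  have hg0 : A 0 η ≠ 0 := (A_pos η).ne'
  have hmain := (he.const_mul 3).div h0 hg0
  have hpoly : HasDerivAt (fun η : ℝ => 3 - 2 * η + 4 * η ^ 2 / α) (0 - 2 * 1 + 4 * (2 * η ^ 1) / α) η := by
    exact ((hasDerivAt_const η (3:ℝ)).sub ((hasDerivAt_id η).const_mul 2)).add
      (((hasDerivAt_pow 2 η).const_mul 4).div_const α)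
  have := hmain.sub hpoly
  refine this.congr_deriv ?_
  field_simp
  ring

lemma hB2 (α : ℝ) (hα : α ≠ 0) (η : ℝ) :
    HasDerivAt (fun η : ℝ => -3 * Real.exp (-η) / A 0 η + 3 * Real.exp (-η) * A 2 η / A 0 η ^ 2
        + 2 - 8 * η / α)
      (3 * Real.exp (-η) / A 0 η - 6 * Real.exp (-η) * A 2 η / A 0 η ^ 2
        - 3 * Real.exp (-η) * A 4 η / A 0 η ^ 2 + 6 * Real.exp (-η) * A 2 η ^ 2 / A 0 η ^ 3
        - 8 / α) η := by
  have he : HasDerivAt (fun η : ℝ => Real.exp (-η)) (-Real.exp (-η)) η := by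
    simpa using (hasDerivAt_neg η).exp
  have h0 := hasDerivAt_A 0 η
  have h2 := hasDerivAt_A 2 η
  have hg0 : A 0 η ≠ 0 := (A_pos η).ne'
  have t1 := (he.const_mul (-3)).div h0 hg0
  have t2 := ((he.const_mul 3).mul h2).div (h0.pow 2) (pow_ne_zero 2 hg0)
  have t4 := ((hasDerivAt_id η).const_mul 8).div_const α
  have tot := ((t1.add t2).add (hasDerivAt_const η (2:ℝ))).sub t4
  refine tot.congr_deriv ?_
  norm_num
  field_simp
  ring

lemma hB3 (α : ℝ) (hα : α ≠ 0) (η : ℝ) :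
    HasDerivAt (fun η : ℝ => 3 * Real.exp (-η) / A 0 η - 6 * Real.exp (-η) * A 2 η / A 0 η ^ 2
        - 3 * Real.exp (-η) * A 4 η / A 0 η ^ 2 + 6 * Real.exp (-η) * A 2 η ^ 2 / A 0 η ^ 3
        - 8 / α)
      (-3 * Real.exp (-η) / A 0 η + 9 * Real.exp (-η) * A 2 η / A 0 η ^ 2
        + 9 * Real.exp (-η) * A 4 η / A 0 η ^ 2 + 3 * Real.exp (-η) * A 6 η / A 0 η ^ 2
        - 18 * Real.exp (-η) * A 2 η ^ 2 / A 0 η ^ 3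
        - 18 * Real.exp (-η) * A 2 η * A 4 η / A 0 η ^ 3
        + 18 * Real.exp (-η) * A 2 η ^ 3 / A 0 η ^ 4) η := by
  have he : HasDerivAt (fun η : ℝ => Real.exp (-η)) (-Real.exp (-η)) η := by
    simpa using (hasDerivAt_neg η).exp
  have h0 := hasDerivAt_A 0 η
  have h2 := hasDerivAt_A 2 η
  have h4 := hasDerivAt_A 4 η
  have hg0 : A 0 η ≠ 0 := (A_pos η).ne'
  have u1 := (he.const_mul 3).div h0 hg0
  have u2 := ((he.const_mul 6).mul h2).div (h0.pow 2) (pow_ne_zero 2 hg0)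
  have u3 := ((he.const_mul 3).mul h4).div (h0.pow 2) (pow_ne_zero 2 hg0)
  have u4 := ((he.const_mul 6).mul (h2.pow 2)).div (h0.pow 3) (pow_ne_zero 3 hg0)
  have tot := (((u1.sub u2).sub u3).add u4).sub (hasDerivAt_const η ((8:ℝ)/α))
  refine tot.congr_deriv ?_
  norm_num
  field_simp
  ring

lemma part1 (α : ℝ) (hα : 0 < α) :
    iteratedDeriv 3 (fun η : ℝ => B η α) 0 = -(32 / 105) := by
  have hα' := hα.ne'
  have d1 : deriv (fun η : ℝ => B η α) = fun η : ℝ =>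
      -3 * Real.exp (-η) / A 0 η + 3 * Real.exp (-η) * A 2 η / A 0 η ^ 2 + 2 - 8 * η / α :=
    funext fun η => (hB1 α hα' η).deriv
  have d2 : deriv (fun η : ℝ =>
      -3 * Real.exp (-η) / A 0 η + 3 * Real.exp (-η) * A 2 η / A 0 η ^ 2 + 2 - 8 * η / α)
      = fun η : ℝ => 3 * Real.exp (-η) / A 0 η - 6 * Real.exp (-η) * A 2 η / A 0 η ^ 2
        - 3 * Real.exp (-η) * A 4 η / A 0 η ^ 2 + 6 * Real.exp (-η) * A 2 η ^ 2 / A 0 η ^ 3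
        - 8 / α :=
    funext fun η => (hB2 α hα' η).deriv
  have d3 := (hB3 α hα' 0).deriv
  have h3 : iteratedDeriv 3 (fun η : ℝ => B η α) 0
      = deriv (deriv (deriv (fun η : ℝ => B η α))) 0 := by
    simp [iteratedDeriv_succ, iteratedDeriv_zero]
  rw [h3, d1, d2, d3]
  rw [show A 0 0 = 1 by simpa using A_zero 0, show A 2 0 = 1/3 by rw [A_zero 2]; norm_num,
    show A 4 0 = 1/5 by rw [A_zero 4]; norm_num, show A 6 0 = 1/7 by rw [A_zero 6]; norm_num]
  norm_num

lemma exp_taylor (x : ℝ) (hx : |x| ≤ 1) :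
    |Real.exp x - (1 + x + x ^ 2 / 2 + x ^ 3 / 6)| ≤ 5 / 96 * x ^ 4 := by
  have h := Real.exp_bound hx (n := 4) (by norm_num)
  have hs : (∑ m ∈ Finset.range 4, x ^ m / m.factorial) = 1 + x + x ^ 2 / 2 + x ^ 3 / 6 := by
    simp [Finset.sum_range_succ, Nat.factorial]
  rw [hs] at h
  have h4 : |x| ^ 4 = x ^ 4 := (even_two.mul_right 2).pow_abs x
  have : |x| ^ 4 * ((4:ℕ).succ / ((4:ℕ).factorial * (4:ℕ))) = 5 / 96 * x ^ 4 := by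
    rw [h4]; norm_num [Nat.factorial]; ring
  linarith [this ▸ h]

lemma poly_int (η : ℝ) :
    (∫ z in (0:ℝ)..1, (1 + (-η) * z ^ 2 + η ^ 2 / 2 * z ^ 4 + (-η ^ 3 / 6) * z ^ 6))
      = 1 - η / 3 + η ^ 2 / 10 - η ^ 3 / 42 := by
  have ic : ∀ (c : ℝ) (n : ℕ), IntervalIntegrable (fun z : ℝ => c * z ^ n) volume 0 1 :=
    fun c n => ((continuous_const.mul (continuous_pow n)).intervalIntegrable 0 1)
  have i1 : IntervalIntegrable (fun _ : ℝ => (1:ℝ)) volume 0 1 := intervalIntegrable_const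
  rw [intervalIntegral.integral_add ((i1.add (ic (-η) 2)).add (ic (η^2/2) 4)) (ic (-η^3/6) 6),
    intervalIntegral.integral_add (i1.add (ic (-η) 2)) (ic (η^2/2) 4),
    intervalIntegral.integral_add i1 (ic (-η) 2)]
  simp [intervalIntegral.integral_const_mul, integral_pow]
  ring

lemma g_approx (η : ℝ) (hη : |η| ≤ 1) :
    |A 0 η - (1 - η / 3 + η ^ 2 / 10 - η ^ 3 / 42)| ≤ 5 / 96 * η ^ 4 := by
  have A0eq : A 0 η = ∫ z in (0:ℝ)..1, Real.exp (-η * z ^ 2) := by simp [A]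
  have hce : Continuous (fun z : ℝ => Real.exp (-η * z ^ 2)) := by continuity
  have hcp : Continuous (fun z : ℝ => 1 + (-η) * z ^ 2 + η ^ 2 / 2 * z ^ 4 + (-η ^ 3 / 6) * z ^ 6) := by
    continuity
  rw [A0eq, ← poly_int η, ← intervalIntegral.integral_sub (hce.intervalIntegrable 0 1)
    (hcp.intervalIntegrable 0 1)]
  have key := intervalIntegral.norm_integral_le_of_norm_le_const (a := 0) (b := 1)
    (C := 5 / 96 * η ^ 4)
    (f := fun z => Real.exp (-η * z ^ 2) - (1 + (-η) * z ^ 2 + η ^ 2 / 2 * z ^ 4 + (-η ^ 3 / 6) * z ^ 6))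
    ?_
  · simpa using key
  · intro z hz
    have hz' : z ∈ Set.Ioc (0:ℝ) 1 := by
      simpa [Set.uIoc_of_le (by norm_num : (0:ℝ) ≤ 1)] using hz
    have hz2 : z ^ 2 ≤ 1 := by nlinarith [hz'.1, hz'.2]
    have hz2' : 0 ≤ z ^ 2 := sq_nonneg z
    have hx : |(-η * z ^ 2)| ≤ 1 := by
      rw [abs_mul, abs_neg]
      calc |η| * |z ^ 2| ≤ 1 * 1 := by
            apply mul_le_mul hη _ (abs_nonneg _) zero_le_one
            rw [abs_of_nonneg hz2']; exact hz2
        _ = 1 := by norm_num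
    have h := exp_taylor (-η * z ^ 2) hx
    rw [Real.norm_eq_abs]
    have e1 : 1 + (-η * z ^ 2) + (-η * z ^ 2) ^ 2 / 2 + (-η * z ^ 2) ^ 3 / 6
        = 1 + (-η) * z ^ 2 + η ^ 2 / 2 * z ^ 4 + (-η ^ 3 / 6) * z ^ 6 := by ring
    rw [e1] at h
    have e2 : 5 / 96 * (-η * z ^ 2) ^ 4 ≤ 5 / 96 * η ^ 4 := by
      have h8 : z ^ 8 ≤ 1 := by
        calc z ^ 8 = (z ^ 2) ^ 4 := by ring
          _ ≤ 1 ^ 4 := pow_le_pow_left₀ hz2' hz2 4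
          _ = 1 := one_pow 4
      nlinarith [pow_nonneg (sq_nonneg η) 2, sq_nonneg (η^2)]
    linarith

lemma core_ineq (t e g : ℝ) (ht0 : t ≠ 0) (ht : |t| ≤ 1 / 10)
    (hre' : |e - (1 - t + t ^ 2 / 2 - t ^ 3 / 6)| ≤ 5 / 96 * t ^ 4)
    (hrg' : |g - (1 - t / 3 + t ^ 2 / 10 - t ^ 3 / 42)| ≤ 5 / 96 * t ^ 4) :
    t * (3 * e - (3 - 2 * t + 4 * t ^ 2 / 7.5) * g) < 0 := by
  obtain ⟨htl, htr⟩ := abs_le.mp ht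
  obtain ⟨re, rfl⟩ : ∃ re, e = (1 - t + t ^ 2 / 2 - t ^ 3 / 6) + re :=
    ⟨e - (1 - t + t ^ 2 / 2 - t ^ 3 / 6), by ring⟩
  obtain ⟨rg, rfl⟩ : ∃ rg, g = (1 - t / 3 + t ^ 2 / 10 - t ^ 3 / 42) + rg :=
    ⟨g - (1 - t / 3 + t ^ 2 / 10 - t ^ 3 / 42), by ring⟩
  rw [add_sub_cancel_left] at hre' hrg'
  obtain ⟨hre1, hre2⟩ := abs_le.mp hre'
  obtain ⟨hrg1, hrg2⟩ := abs_le.mp hrg'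
  have ht4 : 0 < t ^ 4 := by positivity
  have habs : |t| ^ 4 = t ^ 4 := (even_two.mul_right 2).pow_abs t
  have h5 : |t ^ 5| ≤ 1 / 10 * t ^ 4 := by
    rw [abs_pow]
    calc |t| ^ 5 = |t| * |t| ^ 4 := by ring
      _ ≤ 1 / 10 * t ^ 4 := by rw [habs]; exact mul_le_mul_of_nonneg_right ht ht4.le
  have ht2 : t ^ 2 ≤ 1 / 100 := by nlinarith
  have h6 : t ^ 6 ≤ 1 / 100 * t ^ 4 := by nlinarith [mul_le_mul_of_nonneg_left ht2 ht4.le]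
  have hPb : |3 - 2 * t + 8 / 15 * t ^ 2| ≤ 4 := by
    rw [abs_le]
    constructor <;> nlinarith [sq_nonneg t]
  have hte : |t * re| ≤ 1 / 10 * (5 / 96 * t ^ 4) := by
    rw [abs_mul]
    exact mul_le_mul ht hre' (abs_nonneg _) (by norm_num)
  have htg : |t * ((3 - 2 * t + 8 / 15 * t ^ 2) * rg)| ≤ 1 / 10 * (4 * (5 / 96 * t ^ 4)) := by
    rw [abs_mul, abs_mul]
    apply mul_le_mul ht _ (by positivity) (by norm_num)
    exact mul_le_mul hPb hrg' (abs_nonneg _) (by norm_num)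
  obtain ⟨h51, h52⟩ := abs_le.mp h5
  obtain ⟨hte1, hte2⟩ := abs_le.mp hte
  obtain ⟨htg1, htg2⟩ := abs_le.mp htg
  have key : t * (3 * ((1 - t + t ^ 2 / 2 - t ^ 3 / 6) + re)
        - (3 - 2 * t + 4 * t ^ 2 / 7.5) * ((1 - t / 3 + t ^ 2 / 10 - t ^ 3 / 42) + rg))
      = -(16 / 315) * t ^ 4 - 53 / 525 * t ^ 5 + 4 / 315 * t ^ 6
        + 3 * (t * re) - t * ((3 - 2 * t + 8 / 15 * t ^ 2) * rg) := by
    ring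
  rw [key]
  linarith

lemma part2core (t : ℝ) (ht0 : t ≠ 0) (ht : |t| ≤ 1 / 10) : t * B t 7.5 < 0 := by
  have hg : 0 < A 0 t := A_pos t
  have h1 : |t| ≤ 1 := ht.trans (by norm_num)
  have hre : |Real.exp (-t) - (1 - t + t ^ 2 / 2 - t ^ 3 / 6)| ≤ 5 / 96 * t ^ 4 := by
    have h := exp_taylor (-t) (by rw [abs_neg]; exact h1)
    have e1 : 1 + -t + (-t) ^ 2 / 2 + (-t) ^ 3 / 6 = 1 - t + t ^ 2 / 2 - t ^ 3 / 6 := by ring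
    have e2 : (-t) ^ 4 = t ^ 4 := by ring
    rw [e1, e2] at h
    exact h
  have hrg := g_approx t h1
  have hBeq : t * B t 7.5
      = t * (3 * Real.exp (-t) - (3 - 2 * t + 4 * t ^ 2 / 7.5) * A 0 t) / A 0 t := by
    rw [B, eq_div_iff hg.ne']
    field_simp
  rw [hBeq]
  exact div_neg_of_neg_of_pos (core_ineq t _ _ ht0 ht hre hrg) hg

/-- For every `α > 0`, `B_ηηη(0, α) = −32/105`; consequently for `α = 7.5` one
has `η · B(η, 7.5) < 0` for all `η ≠ 0` with `|η|` sufficiently small. -/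
theorem stmt_10 :
    (∀ α : ℝ, 0 < α → iteratedDeriv 3 (fun η : ℝ => B η α) 0 = -(32 / 105)) ∧
    (∃ δ : ℝ, 0 < δ ∧ ∀ η : ℝ, η ≠ 0 → |η| < δ → η * B η 7.5 < 0) := by
  refine ⟨part1, ⟨1 / 10, by norm_num, fun η hη0 hη => part2core η hη0 hη.le⟩⟩
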